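/- Fourier transform of the one-dimensional Fresnel kernel: let k > 0 and z > 0 be real numbers. Then for every real ξ, the improper integral lim_{T→∞} ∫_{−T}^{T} e^{−iπ/4} √(k/(2πz)) exp(i k x²/(2z)) e^{−2πiξx} dx exists and equals exp(−i(2π²z/k) ξ²). -/

import Mathlib

open Real Filter

open MeasureTheory intervalIntegral Complex in
lemma fresnel_ibp {b : ℂ} (hb : b ≠ 0) {T S : ℝ} (hT : 0 < T) (hTS : T ≤ S) :
    ∫ x in T..S, Complex.exp (-b * x ^ 2) =
      (-2 * b * S)⁻¹ * Complex.exp (-b * S ^ 2) - (-2 * b * T)⁻¹ * Complex.exp (-b * T ^ 2)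
        - ∫ x in T..S, (2 * b * x ^ 2)⁻¹ * Complex.exp (-b * x ^ 2) := by
  have hmem : ∀ x ∈ Set.uIcc T S, (0:ℝ) < x := by
    intro x hx
    rw [Set.uIcc_of_le hTS] at hx
    exact lt_of_lt_of_le hT hx.1
  have hu : ∀ x ∈ Set.uIcc T S, HasDerivAt (fun y : ℝ => (-2 * b * y)⁻¹)
      ((2 * b * x ^ 2)⁻¹) x := by
    intro x hx
    have hx0 : (x:ℂ) ≠ 0 := by exact_mod_cast (hmem x hx).ne'
    have h1 : HasDerivAt (fun w : ℂ => (-2 * b * w)⁻¹)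
        (-(-2*b) / (-2 * b * (x:ℂ)) ^ 2) (x:ℝ) := by
      have h := ((hasDerivAt_id ((x:ℝ):ℂ)).const_mul (-2*b)).inv (by simp [hb, hx0])
      rw [mul_one] at h
      exact h
    have h2 := h1.comp_ofReal
    convert h2 using 1
    field_simp
  have hv : ∀ x ∈ Set.uIcc T S, HasDerivAt (fun y : ℝ => Complex.exp (-b * y ^ 2))
      (-2 * b * x * Complex.exp (-b * x ^ 2)) x := by
    intro x hx
    have h1 : HasDerivAt (fun w : ℂ => Complex.exp (-b * w ^ 2))
        (Complex.exp (-b * (x:ℂ)^2) * (-b * (2 * (x:ℂ)^1 * 1))) (x:ℝ) := by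
      simpa using (((hasDerivAt_id ((x:ℝ):ℂ)).pow 2).const_mul (-b)).cexp
    have h2 := h1.comp_ofReal
    convert h2 using 1
    ring
  have hu' : IntervalIntegrable (fun x : ℝ => (2 * b * (x:ℂ) ^ 2)⁻¹) volume T S := by
    apply ContinuousOn.intervalIntegrable
    apply ContinuousOn.inv₀
    · fun_prop
    · intro x hx
      have hx0 : (x:ℂ) ≠ 0 := by exact_mod_cast (hmem x hx).ne'
      simp [hb, hx0]
  have hv' : IntervalIntegrable (fun x : ℝ => -2 * b * x * Complex.exp (-b * x ^ 2))
      volume T S := by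
    apply ContinuousOn.intervalIntegrable
    fun_prop
  have := intervalIntegral.integral_mul_deriv_eq_deriv_mul hu hv hu' hv'
  rw [← this]
  apply intervalIntegral.integral_congr
  intro x hx
  have hx0 : (x:ℂ) ≠ 0 := by exact_mod_cast (hmem x hx).ne'
  have h2b : (-2 * b * (x:ℂ)) ≠ 0 := by simp [hb, hx0]
  field_simp

open MeasureTheory intervalIntegral Complex in
lemma norm_cexp_sq_le_one {b : ℂ} (hbre : 0 ≤ b.re) (x : ℝ) :
    ‖Complex.exp (-b * x ^ 2)‖ ≤ 1 := by
  rw [Complex.norm_exp]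
  apply Real.exp_le_one_iff.mpr
  have h : ((-b * (x:ℂ) ^ 2)).re = -b.re * x ^ 2 := by
    have h1 : ((x:ℂ)^2).im = 0 := by rw [← Complex.ofReal_pow]; exact Complex.ofReal_im _
    have h2 : ((x:ℂ)^2).re = x^2 := by rw [← Complex.ofReal_pow]; exact Complex.ofReal_re _
    simp only [Complex.neg_re, Complex.neg_im, Complex.mul_re, h1, h2]; ring
  rw [h]
  nlinarith [sq_nonneg x]

open MeasureTheory intervalIntegral Complex in
lemma fresnel_tail {a : ℝ} (ha : 0 < a) {b : ℂ} (hbre : 0 < b.re) (hbim : a ≤ |b.im|)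
    {T : ℝ} (hT : 0 < T) :
    ‖∫ x in Set.Ioi T, Complex.exp (-b * x ^ 2)‖ ≤ 1 / (a * T) := by
  have hb : b ≠ 0 := by
    intro h; rw [h] at hbre; simp at hbre
  have habs : a ≤ ‖b‖ := le_trans hbim (Complex.abs_im_le_norm b)
  have hint : IntegrableOn (fun x : ℝ => Complex.exp (-b * x ^ 2)) (Set.Ioi T) :=
    (integrable_cexp_neg_mul_sq hbre).integrableOn
  have hlim : Tendsto (fun S => ∫ x in T..S, Complex.exp (-b * x ^ 2)) atTop
      (nhds (∫ x in Set.Ioi T, Complex.exp (-b * x ^ 2))) :=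
    intervalIntegral_tendsto_integral_Ioi T hint tendsto_id
  -- norm of exp term ≤ 1
  have hexp : ∀ x : ℝ, ‖Complex.exp (-b * x ^ 2)‖ ≤ 1 := by
    intro x
    rw [Complex.norm_exp]
    apply Real.exp_le_one_iff.mpr
    have h : ((-b * (x:ℂ) ^ 2)).re = -b.re * x ^ 2 := by
      have h1 : ((x:ℂ)^2).im = 0 := by rw [← Complex.ofReal_pow]; exact Complex.ofReal_im _
      have h2 : ((x:ℂ)^2).re = x^2 := by rw [← Complex.ofReal_pow]; exact Complex.ofReal_re _
      simp only [Complex.neg_re, Complex.neg_im, Complex.mul_re, h1, h2]; ring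
    rw [h]
    nlinarith [sq_nonneg x]
  -- bound for each S ≥ T
  have hbound : ∀ S : ℝ, T ≤ S →
      ‖∫ x in T..S, Complex.exp (-b * x ^ 2)‖ ≤ 1 / (a * T) + 1 / (2 * a * S) := by
    intro S hTS
    have hS : 0 < S := lt_of_lt_of_le hT hTS
    rw [fresnel_ibp hb hT hTS]
    have hb1 : ‖(-2 * b * (S:ℂ))⁻¹ * Complex.exp (-b * S ^ 2)‖ ≤ 1 / (2 * a * S) := by
      rw [norm_mul, norm_inv]
      calc ‖(-2 * b * (S:ℂ))‖⁻¹ * ‖Complex.exp (-b * S ^ 2)‖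
          ≤ (2 * a * S)⁻¹ * 1 := by
            apply mul_le_mul _ (hexp S) (norm_nonneg _) (by positivity)
            apply inv_anti₀ (by positivity)
            rw [norm_mul, norm_mul]
            simp [abs_of_pos hS]
            nlinarith [norm_nonneg b]
        _ = 1 / (2 * a * S) := by rw [mul_one, one_div]
    have hb2 : ‖(-2 * b * (T:ℂ))⁻¹ * Complex.exp (-b * T ^ 2)‖ ≤ 1 / (2 * a * T) := by
      rw [norm_mul, norm_inv]
      calc ‖(-2 * b * (T:ℂ))‖⁻¹ * ‖Complex.exp (-b * T ^ 2)‖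
          ≤ (2 * a * T)⁻¹ * 1 := by
            apply mul_le_mul _ (hexp T) (norm_nonneg _) (by positivity)
            apply inv_anti₀ (by positivity)
            rw [norm_mul, norm_mul]
            simp [abs_of_pos hT]
            nlinarith [norm_nonneg b]
        _ = 1 / (2 * a * T) := by rw [mul_one, one_div]
    have hb3 : ‖∫ x in T..S, (2 * b * (x:ℂ) ^ 2)⁻¹ * Complex.exp (-b * x ^ 2)‖
        ≤ 1 / (2 * a * T) := by
      have hptw : ∀ x ∈ Set.Icc T S, ‖(2 * b * (x:ℂ) ^ 2)⁻¹ * Complex.exp (-b * x ^ 2)‖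
          ≤ (2 * a * x ^ 2)⁻¹ := by
        intro x hx
        have hx0 : 0 < x := lt_of_lt_of_le hT hx.1
        rw [norm_mul, norm_inv]
        calc ‖2 * b * (x:ℂ) ^ 2‖⁻¹ * ‖Complex.exp (-b * x ^ 2)‖
            ≤ (2 * a * x ^ 2)⁻¹ * 1 := by
              apply mul_le_mul _ (hexp x) (norm_nonneg _) (by positivity)
              apply inv_anti₀ (by positivity)
              rw [norm_mul, norm_mul]
              simp only [Complex.norm_real, Real.norm_eq_abs, norm_pow,
                Complex.norm_two]
              rw [abs_of_pos hx0]
              nlinarith [norm_nonneg b, sq_nonneg x, pow_pos hx0 2]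
          _ = (2 * a * x ^ 2)⁻¹ := by rw [mul_one]
      have hint2 : IntervalIntegrable (fun x : ℝ => (2 * a * x ^ 2)⁻¹) volume T S := by
        apply ContinuousOn.intervalIntegrable
        apply ContinuousOn.inv₀
        · fun_prop
        · intro x hx
          rw [Set.uIcc_of_le hTS] at hx
          have : 0 < x := lt_of_lt_of_le hT hx.1
          positivity
      have hval : ∫ x in T..S, (2 * a * x ^ 2)⁻¹ = -(2 * a * S)⁻¹ + (2 * a * T)⁻¹ := by
        have hF : ∀ x ∈ Set.uIcc T S, HasDerivAt (fun y : ℝ => -(2 * a * y)⁻¹)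
            ((2 * a * x ^ 2)⁻¹) x := by
          intro x hx
          rw [Set.uIcc_of_le hTS] at hx
          have hx0 : 0 < x := lt_of_lt_of_le hT hx.1
          have h1 := (((hasDerivAt_id x).const_mul (2*a)).inv (by positivity)).neg
          refine h1.congr_deriv ?_
          simp only [id]
          field_simp
        rw [intervalIntegral.integral_eq_sub_of_hasDerivAt hF hint2]
        ring
      calc ‖∫ x in T..S, (2 * b * (x:ℂ) ^ 2)⁻¹ * Complex.exp (-b * x ^ 2)‖
          ≤ |∫ x in T..S, (2 * a * x ^ 2)⁻¹| := by
            apply intervalIntegral.norm_integral_le_abs_of_norm_le _ hint2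
            filter_upwards [ae_restrict_mem measurableSet_uIoc] with x hx
            apply hptw
            rw [Set.uIoc_of_le hTS] at hx
            exact ⟨le_of_lt hx.1, hx.2⟩
        _ ≤ 1 / (2 * a * T) := by
            rw [hval, one_div]
            have h1 : 0 < (2 * a * S)⁻¹ := by positivity
            have h2 : (2 * a * S)⁻¹ ≤ (2 * a * T)⁻¹ := by
              apply inv_anti₀ (by positivity)
              nlinarith
            rw [_root_.abs_of_nonneg (by linarith)]
            linarith
    calc ‖(-2 * b * (S:ℂ))⁻¹ * Complex.exp (-b * S ^ 2) -
            (-2 * b * (T:ℂ))⁻¹ * Complex.exp (-b * T ^ 2) -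
            ∫ x in T..S, (2 * b * (x:ℂ) ^ 2)⁻¹ * Complex.exp (-b * x ^ 2)‖
        ≤ ‖(-2 * b * (S:ℂ))⁻¹ * Complex.exp (-b * S ^ 2) -
            (-2 * b * (T:ℂ))⁻¹ * Complex.exp (-b * T ^ 2)‖ +
          ‖∫ x in T..S, (2 * b * (x:ℂ) ^ 2)⁻¹ * Complex.exp (-b * x ^ 2)‖ := norm_sub_le _ _
      _ ≤ (‖(-2 * b * (S:ℂ))⁻¹ * Complex.exp (-b * S ^ 2)‖ +
            ‖(-2 * b * (T:ℂ))⁻¹ * Complex.exp (-b * T ^ 2)‖) +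
          ‖∫ x in T..S, (2 * b * (x:ℂ) ^ 2)⁻¹ * Complex.exp (-b * x ^ 2)‖ := by
            gcongr
            exact norm_sub_le _ _
      _ ≤ (1 / (2 * a * S) + 1 / (2 * a * T)) + 1 / (2 * a * T) := by gcongr
      _ = 1 / (a * T) + 1 / (2 * a * S) := by field_simp; ring
  -- pass to the limit S → ∞
  have hgl : Tendsto (fun S : ℝ => 1 / (a * T) + 1 / (2 * a * S)) atTop
      (nhds (1 / (a * T) + 0)) := by
    apply tendsto_const_nhds.add
    have h1 : Tendsto (fun S : ℝ => 2 * a * S) atTop atTop :=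
      Tendsto.const_mul_atTop (by positivity) tendsto_id
    exact tendsto_const_nhds.div_atTop h1
  rw [show (1:ℝ) / (a * T) = 1 / (a * T) + 0 by ring]
  apply le_of_tendsto_of_tendsto hlim.norm hgl
  filter_upwards [eventually_ge_atTop T] with S hS
  exact hbound S hS

open MeasureTheory intervalIntegral Complex in
lemma fresnel_est {a : ℝ} (ha : 0 < a) {S T : ℝ} (hS : 0 < S) (hT : 0 < T) :
    ‖(∫ x in (-S)..T, Complex.exp (Complex.I * a * x ^ 2)) -
      ((π : ℂ) / (-Complex.I * a)) ^ (1/2 : ℂ)‖ ≤ 1 / (a * S) + 1 / (a * T) := by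
  have hIa : (-Complex.I * (a:ℂ)) ≠ 0 := by
    simp [Complex.I_ne_zero, ne_of_gt ha, Complex.ofReal_eq_zero]
  -- the estimate for each ε > 0
  have hε_est : ∀ ε : ℝ, 0 < ε →
      ‖((π : ℂ) / ((ε : ℂ) - Complex.I * a)) ^ (1/2 : ℂ) -
        ∫ x in (-S)..T, Complex.exp (-((ε:ℂ) - Complex.I * a) * x ^ 2)‖
        ≤ 1 / (a * S) + 1 / (a * T) := by
    intro ε hε
    set b : ℂ := (ε : ℂ) - Complex.I * a with hbdef
    have hbre : 0 < b.re := by simp [hbdef, Complex.sub_re, Complex.mul_re]; exact hε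
    have hbim : a ≤ |b.im| := by
      have : b.im = -a := by simp [hbdef, Complex.sub_im, Complex.mul_im]
      rw [this, abs_neg, abs_of_pos ha]
    have hint : Integrable (fun x : ℝ => Complex.exp (-b * x ^ 2)) :=
      integrable_cexp_neg_mul_sq hbre
    have hgauss : ∫ x : ℝ, Complex.exp (-b * x ^ 2) = ((π : ℂ) / b) ^ (1/2 : ℂ) :=
      integral_gaussian_complex hbre
    -- split the real line integral
    have hsplit1 : (∫ x in Set.Iic T, Complex.exp (-b * x ^ 2)) +
        (∫ x in Set.Ioi T, Complex.exp (-b * x ^ 2)) = ∫ x : ℝ, Complex.exp (-b * x ^ 2) :=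
      integral_Iic_add_Ioi hint.integrableOn hint.integrableOn
    have hsplit2 : (∫ x in Set.Iic T, Complex.exp (-b * x ^ 2)) -
        (∫ x in Set.Iic (-S), Complex.exp (-b * x ^ 2)) =
        ∫ x in (-S)..T, Complex.exp (-b * x ^ 2) :=
      integral_Iic_sub_Iic hint.integrableOn hint.integrableOn
    have hIic : (∫ x in Set.Iic (-S), Complex.exp (-b * x ^ 2)) =
        ∫ x in Set.Ioi S, Complex.exp (-b * x ^ 2) := by
      rw [show Set.Ioi S = Set.Ioi (-(-S)) by ring_nf]
      rw [← integral_comp_neg_Iic]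
      apply setIntegral_congr_fun measurableSet_Iic
      intro x _
      norm_num
    have hkey : ((π : ℂ) / b) ^ (1/2 : ℂ) - (∫ x in (-S)..T, Complex.exp (-b * x ^ 2)) =
        (∫ x in Set.Ioi S, Complex.exp (-b * x ^ 2)) +
        (∫ x in Set.Ioi T, Complex.exp (-b * x ^ 2)) := by
      rw [← hgauss, ← hsplit1, ← hsplit2, hIic]
      ring
    rw [hkey]
    calc ‖(∫ x in Set.Ioi S, Complex.exp (-b * x ^ 2)) +
            (∫ x in Set.Ioi T, Complex.exp (-b * x ^ 2))‖
        ≤ ‖∫ x in Set.Ioi S, Complex.exp (-b * x ^ 2)‖ +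
          ‖∫ x in Set.Ioi T, Complex.exp (-b * x ^ 2)‖ := norm_add_le _ _
      _ ≤ 1 / (a * S) + 1 / (a * T) := by
          gcongr
          · exact fresnel_tail ha hbre hbim hS
          · exact fresnel_tail ha hbre hbim hT
  -- limits as ε → 0⁺
  have hlim1 : Tendsto (fun ε : ℝ => ((π : ℂ) / ((ε : ℂ) - Complex.I * a)) ^ (1/2 : ℂ))
      (nhdsWithin 0 (Set.Ioi 0)) (nhds (((π : ℂ) / (-Complex.I * a)) ^ (1/2 : ℂ))) := by
    have hw : (π : ℂ) / (-Complex.I * a) = ((π / a : ℝ) : ℂ) * Complex.I := by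
      rw [div_eq_iff hIa]
      push_cast [ne_of_gt ha]
      rw [div_mul_eq_mul_div, div_mul_eq_mul_div, eq_div_iff (by exact_mod_cast ne_of_gt ha)]
      rw [show (π:ℂ) * Complex.I * (-Complex.I * a) = -(Complex.I * Complex.I) * π * a by ring]
      rw [Complex.I_mul_I]
      ring
    have hzero : ((0:ℝ):ℂ) - Complex.I * a = -Complex.I * a := by push_cast; ring
    have hcont : ContinuousAt (fun w : ℂ => w ^ (1/2 : ℂ))
        ((π : ℂ) / (((0:ℝ):ℂ) - Complex.I * a)) := by
      rw [hzero]
      apply continuousAt_cpow_const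
      rw [Complex.mem_slitPlane_iff]
      right
      rw [hw]
      have him : (((π / a : ℝ) : ℂ) * Complex.I).im = π / a := by
        simp [Complex.mul_im]
      rw [him]
      positivity
    have hcont2 : ContinuousAt (fun ε : ℝ => (π : ℂ) / ((ε : ℂ) - Complex.I * a)) 0 := by
      apply ContinuousAt.div continuousAt_const
      · fun_prop
      · rw [hzero]; exact hIa
    have hcomp : ContinuousAt (fun ε : ℝ =>
        ((π : ℂ) / ((ε : ℂ) - Complex.I * a)) ^ (1/2 : ℂ)) 0 :=
      ContinuousAt.comp (g := fun w : ℂ => w ^ (1/2 : ℂ))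
        (f := fun ε : ℝ => (π : ℂ) / ((ε : ℂ) - Complex.I * a)) (x := (0:ℝ)) hcont hcont2
    have h2 := hcomp.tendsto.mono_left (nhdsWithin_le_nhds (s := Set.Ioi (0:ℝ)))
    rw [show ((π : ℂ) / (((0:ℝ):ℂ) - Complex.I * a)) ^ (1/2 : ℂ)
        = ((π : ℂ) / (-Complex.I * a)) ^ (1/2 : ℂ) by rw [hzero]] at h2
    exact h2
  have hlim2 : Tendsto (fun ε : ℝ => ∫ x in (-S)..T,
        Complex.exp (-((ε:ℂ) - Complex.I * a) * x ^ 2))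
      (nhdsWithin 0 (Set.Ioi 0))
      (nhds (∫ x in (-S)..T, Complex.exp (Complex.I * a * x ^ 2))) := by
    apply intervalIntegral.tendsto_integral_filter_of_dominated_convergence (fun _ => (1:ℝ))
    · filter_upwards [] with ε
      apply Continuous.aestronglyMeasurable
      fun_prop
    · filter_upwards [self_mem_nhdsWithin] with ε (hε : 0 < ε)
      filter_upwards [] with x _
      apply norm_cexp_sq_le_one
      simp only [Complex.sub_re, Complex.ofReal_re, Complex.mul_re, Complex.I_re,
        Complex.ofReal_im, Complex.I_im]
      nlinarith
    · exact intervalIntegrable_const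
    · filter_upwards [] with x _
      have : Continuous fun ε : ℝ => Complex.exp (-((ε:ℂ) - Complex.I * a) * x ^ 2) := by
        fun_prop
      have h0 := this.tendsto 0
      simp only [Complex.ofReal_zero, zero_sub, neg_neg] at h0
      exact h0.mono_left nhdsWithin_le_nhds
  -- combine
  have hfinal := hlim1.sub hlim2
  have hev : ∀ᶠ ε : ℝ in nhdsWithin 0 (Set.Ioi 0),
      ‖((π : ℂ) / ((ε : ℂ) - Complex.I * a)) ^ (1/2 : ℂ) -
        ∫ x in (-S)..T, Complex.exp (-((ε:ℂ) - Complex.I * a) * x ^ 2)‖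
        ≤ 1 / (a * S) + 1 / (a * T) := by
    filter_upwards [self_mem_nhdsWithin] with ε hε
    exact hε_est ε hε
  have := le_of_tendsto hfinal.norm hev
  rwa [norm_sub_rev] at this

open MeasureTheory intervalIntegral Complex in
lemma fresnel_limit {a : ℝ} (c : ℝ) (ha : 0 < a) :
    Tendsto (fun T : ℝ => ∫ x in (-T - c)..(T - c), Complex.exp (Complex.I * a * x ^ 2)) atTop
      (nhds (((π : ℂ) / (-Complex.I * a)) ^ (1/2 : ℂ))) := by
  rw [tendsto_iff_dist_tendsto_zero]
  apply squeeze_zero' (Eventually.of_forall fun T => dist_nonneg)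
    (g := fun T : ℝ => 1 / (a * (T + c)) + 1 / (a * (T - c)))
  · filter_upwards [eventually_ge_atTop (|c| + 1)] with T hT
    have hc1 : c ≤ |c| := le_abs_self c
    have hc2 : -c ≤ |c| := neg_le_abs c
    have h1 : 0 < T + c := by linarith
    have h2 : 0 < T - c := by linarith
    rw [dist_eq_norm, show -T - c = -(T + c) by ring]
    exact fresnel_est ha h1 h2
  · have ht1 : Tendsto (fun T : ℝ => a * (T + c)) atTop atTop :=
      (tendsto_atTop_add_const_right atTop c tendsto_id).const_mul_atTop ha
    have ht2 : Tendsto (fun T : ℝ => a * (T - c)) atTop atTop :=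
      (tendsto_atTop_add_const_right atTop (-c) tendsto_id).const_mul_atTop ha
    have hA : Tendsto (fun T : ℝ => 1 / (a * (T + c))) atTop (nhds 0) :=
      tendsto_const_nhds.div_atTop ht1
    have hB : Tendsto (fun T : ℝ => 1 / (a * (T - c))) atTop (nhds 0) :=
      tendsto_const_nhds.div_atTop ht2
    simpa using hA.add hB

open MeasureTheory intervalIntegral Complex in
lemma fresnel_value {a : ℝ} (ha : 0 < a)
    (hw : (π : ℂ) / (-Complex.I * a) = ((π / a : ℝ) : ℂ) * Complex.I) :
    ((π : ℂ) / (-Complex.I * a)) ^ (1/2 : ℂ)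
      = (Real.sqrt (π / a) : ℂ) * Complex.exp (Complex.I * π / 4) := by
  have hpos : (0:ℝ) < π / a := div_pos Real.pi_pos ha
  have hne : ((π / a : ℝ) : ℂ) * Complex.I ≠ 0 := by
    simp only [ne_eq, mul_eq_zero, Complex.I_ne_zero, or_false, Complex.ofReal_eq_zero]
    exact ne_of_gt hpos
  rw [hw, Complex.cpow_def_of_ne_zero hne, Complex.log_ofReal_mul hpos Complex.I_ne_zero,
    Complex.log_I]
  have h1 : ((Real.log (π / a) : ℂ) + ↑π / 2 * Complex.I) * (1/2 : ℂ)
      = ((Real.log (π / a) / 2 : ℝ) : ℂ) + Complex.I * π / 4 := by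
    push_cast; ring
  rw [h1, Complex.exp_add]
  congr 1
  rw [← Complex.ofReal_exp]
  norm_cast
  rw [show Real.log (π / a) / 2 = Real.log (π / a) * (1/2) by ring,
    ← Real.rpow_def_of_pos hpos]
  exact (Real.sqrt_eq_rpow _).symm

/-- Fourier transform of the one-dimensional Fresnel kernel, as an improper integral:
`lim_{T→∞} ∫_{−T}^{T} e^{−iπ/4} √(k/(2πz)) exp(ikx²/(2z)) e^{−2πiξx} dx
  = exp(−i(2π²z/k)ξ²)`. -/
theorem fresnel_kernel_fourier_transform (k z : ℝ) (hk : 0 < k) (hz : 0 < z) (ξ : ℝ) :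
    Tendsto
      (fun T : ℝ => ∫ x in (-T)..T,
        Complex.exp (-Complex.I * (π : ℂ) / 4) * (Real.sqrt (k / (2 * π * z)) : ℂ) *
          Complex.exp (Complex.I * k * x ^ 2 / (2 * z)) *
          Complex.exp (-2 * (π : ℂ) * Complex.I * ξ * x))
      atTop
      (nhds (Complex.exp (-Complex.I * (2 * (π : ℂ) ^ 2 * z / k) * ξ ^ 2))) := by
  have hπ : (0:ℝ) < π := Real.pi_pos
  set a : ℝ := k / (2 * z) with hadef
  have ha : 0 < a := by positivity
  set c : ℝ := 2 * π * z * ξ / k with hcdef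
  set D : ℂ := -Complex.I * (2 * (π : ℂ) ^ 2 * z / k) * ξ ^ 2 with hDdef
  set K : ℂ := Complex.exp (-Complex.I * (π : ℂ) / 4) * (Real.sqrt (k / (2 * π * z)) : ℂ) *
    Complex.exp D with hKdef
  have hkC : (k:ℂ) ≠ 0 := by exact_mod_cast ne_of_gt hk
  have hzC : (z:ℂ) ≠ 0 := by exact_mod_cast ne_of_gt hz
  -- pointwise rewriting of the integrand
  have hptw : ∀ x : ℝ,
      Complex.exp (-Complex.I * (π : ℂ) / 4) * (Real.sqrt (k / (2 * π * z)) : ℂ) *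
        Complex.exp (Complex.I * k * x ^ 2 / (2 * z)) *
        Complex.exp (-2 * (π : ℂ) * Complex.I * ξ * x)
      = K * Complex.exp (Complex.I * a * ((x - c : ℝ) : ℂ) ^ 2) := by
    intro x
    rw [hKdef]
    have hexp : Complex.exp (Complex.I * k * x ^ 2 / (2 * z)) *
        Complex.exp (-2 * (π : ℂ) * Complex.I * ξ * x)
        = Complex.exp D * Complex.exp (Complex.I * a * ((x - c : ℝ) : ℂ) ^ 2) := by
      rw [← Complex.exp_add, ← Complex.exp_add]
      congr 1
      rw [hDdef, hadef, hcdef]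
      push_cast
      field_simp
      ring
    calc Complex.exp (-Complex.I * (π : ℂ) / 4) * (Real.sqrt (k / (2 * π * z)) : ℂ) *
          Complex.exp (Complex.I * k * x ^ 2 / (2 * z)) *
          Complex.exp (-2 * (π : ℂ) * Complex.I * ξ * x)
        = Complex.exp (-Complex.I * (π : ℂ) / 4) * (Real.sqrt (k / (2 * π * z)) : ℂ) *
          (Complex.exp (Complex.I * k * x ^ 2 / (2 * z)) *
            Complex.exp (-2 * (π : ℂ) * Complex.I * ξ * x)) := by ring
      _ = _ := by rw [hexp]; ring
  -- rewrite the integral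
  have hint : ∀ T : ℝ,
      (∫ x in (-T)..T,
        Complex.exp (-Complex.I * (π : ℂ) / 4) * (Real.sqrt (k / (2 * π * z)) : ℂ) *
          Complex.exp (Complex.I * k * x ^ 2 / (2 * z)) *
          Complex.exp (-2 * (π : ℂ) * Complex.I * ξ * x))
      = K * ∫ x in (-T - c)..(T - c), Complex.exp (Complex.I * a * x ^ 2) := by
    intro T
    rw [show (∫ x in (-T)..T,
        Complex.exp (-Complex.I * (π : ℂ) / 4) * (Real.sqrt (k / (2 * π * z)) : ℂ) *
          Complex.exp (Complex.I * k * x ^ 2 / (2 * z)) *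
          Complex.exp (-2 * (π : ℂ) * Complex.I * ξ * x))
      = ∫ x in (-T)..T, K * Complex.exp (Complex.I * a * ((x - c : ℝ) : ℂ) ^ 2) from
        intervalIntegral.integral_congr fun x _ => hptw x]
    rw [intervalIntegral.integral_const_mul]
    congr 1
    exact intervalIntegral.integral_comp_sub_right
      (fun u : ℝ => Complex.exp (Complex.I * a * (u:ℂ) ^ 2)) c
  -- the limit
  have hlim := (fresnel_limit c ha).const_mul K
  have hval : K * ((π : ℂ) / (-Complex.I * a)) ^ (1/2 : ℂ) = Complex.exp D := by
    have hw : (π : ℂ) / (-Complex.I * a) = ((π / a : ℝ) : ℂ) * Complex.I := by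
      rw [div_eq_iff (by simp [Complex.I_ne_zero, Complex.ofReal_eq_zero, ne_of_gt ha])]
      push_cast
      rw [show ((π:ℂ) / a * Complex.I) * (-Complex.I * a)
          = -(Complex.I * Complex.I) * ((π:ℂ) / a * a) by ring, Complex.I_mul_I]
      have haC : (a:ℂ) ≠ 0 := by exact_mod_cast ne_of_gt ha
      field_simp
    rw [fresnel_value ha hw, hKdef]
    have hsq : (Real.sqrt (k / (2 * π * z)) : ℂ) * (Real.sqrt (π / a) : ℂ) = 1 := by
      rw [← Complex.ofReal_mul, ← Real.sqrt_mul (by positivity)]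
      rw [show k / (2 * π * z) * (π / a) = 1 by rw [hadef]; field_simp]
      simp
    have hexp4 : Complex.exp (-Complex.I * (π : ℂ) / 4) * Complex.exp (Complex.I * π / 4)
        = 1 := by
      rw [← Complex.exp_add]
      rw [show -Complex.I * (π : ℂ) / 4 + Complex.I * π / 4 = 0 by ring]
      exact Complex.exp_zero
    calc Complex.exp (-Complex.I * (π : ℂ) / 4) * (Real.sqrt (k / (2 * π * z)) : ℂ) *
          Complex.exp D * ((Real.sqrt (π / a) : ℂ) * Complex.exp (Complex.I * π / 4))
        = (Complex.exp (-Complex.I * (π : ℂ) / 4) * Complex.exp (Complex.I * π / 4)) *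
          ((Real.sqrt (k / (2 * π * z)) : ℂ) * (Real.sqrt (π / a) : ℂ)) *
          Complex.exp D := by ring
      _ = Complex.exp D := by rw [hsq, hexp4]; ring
  rw [hval] at hlim
  have : (fun T : ℝ => ∫ x in (-T)..T,
        Complex.exp (-Complex.I * (π : ℂ) / 4) * (Real.sqrt (k / (2 * π * z)) : ℂ) *
          Complex.exp (Complex.I * k * x ^ 2 / (2 * z)) *
          Complex.exp (-2 * (π : ℂ) * Complex.I * ξ * x))
      = fun T : ℝ => K * ∫ x in (-T - c)..(T - c), Complex.exp (Complex.I * a * x ^ 2) :=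
    funext hint
  rw [this]
  exact hlim
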